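/- Let v : ℝ → (0,∞) be continuous with v(ξ) → 0 as |ξ| → ∞. Let (u_n) be a sequence of continuously differentiable functions in L^2(ℝ) such that ∫_ℝ (v(ξ)^2 |u_n'(ξ)|^2 + v(ξ)^{-2} |u_n(ξ)|^2) dξ ≤ C for all n and some constant C. Then (u_n) has a subsequence that converges in L^2(ℝ). -/

import Mathlib

open MeasureTheory Real Set Filter

-- Helper: interval integral of a continuous nonneg function dominated by the weight integrand is ≤ C'
lemma helperH (v : ℝ → ℝ) (u0 : ℝ → ℂ) (C' : ℝ)
    (hb : (∫⁻ ξ, ENNReal.ofReal ((v ξ) ^ 2 * ‖deriv u0 ξ‖ ^ 2)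
        + ENNReal.ofReal (((v ξ) ^ 2)⁻¹ * ‖u0 ξ‖ ^ 2)) ≤ ENNReal.ofReal C')
    (h : ℝ → ℝ) (hc : Continuous h) (hpos : ∀ t, 0 ≤ h t)
    (hle : ∀ t, ENNReal.ofReal (h t) ≤ ENNReal.ofReal ((v t) ^ 2 * ‖deriv u0 t‖ ^ 2)
        + ENNReal.ofReal (((v t) ^ 2)⁻¹ * ‖u0 t‖ ^ 2))
    (hC : 0 ≤ C')
    {y x : ℝ} (hyx : y ≤ x) : ∫ t in y..x, h t ≤ C' := by
  rw [intervalIntegral.integral_of_le hyx]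
  rw [MeasureTheory.integral_eq_lintegral_of_nonneg_ae (Filter.Eventually.of_forall fun t => hpos t)
    hc.aestronglyMeasurable.restrict]
  have key : (∫⁻ t in Ioc y x, ENNReal.ofReal (h t)) ≤ ENNReal.ofReal C' := by
    calc ∫⁻ t in Ioc y x, ENNReal.ofReal (h t) ≤ ∫⁻ t, ENNReal.ofReal (h t) :=
          setLIntegral_le_lintegral _ _
    _ ≤ _ := (lintegral_mono hle).trans hb
  calc (∫⁻ t in Ioc y x, ENNReal.ofReal (h t)).toReal
      ≤ (ENNReal.ofReal C').toReal := ENNReal.toReal_mono (by simp) key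
    _ = C' := ENNReal.toReal_ofReal hC

lemma supBound (v : ℝ → ℝ) (u0 : ℝ → ℂ) (hu0 : ContDiff ℝ 1 u0) (C' : ℝ) (hC : 0 ≤ C')
    (hvpos : ∀ ξ, 0 < v ξ)
    (hL2 : MemLp u0 2 (volume : Measure ℝ))
    (hb : (∫⁻ ξ, ENNReal.ofReal ((v ξ) ^ 2 * ‖deriv u0 ξ‖ ^ 2)
        + ENNReal.ofReal (((v ξ) ^ 2)⁻¹ * ‖u0 ξ‖ ^ 2)) ≤ ENNReal.ofReal C') :
    ∀ x, ‖u0 x‖ ^ 2 ≤ C' := by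
  have hdiff : ∀ t, HasDerivAt u0 (deriv u0 t) t :=
    fun t => ((hu0.differentiable one_ne_zero) t).hasDerivAt
  set g : ℝ → ℝ := fun t => ‖u0 t‖ ^ 2 with hgdef
  set g' : ℝ → ℝ := fun t => 2 * (inner ℝ (u0 t) (deriv u0 t) : ℝ) with hg'def
  have hg : ∀ t, HasDerivAt g (g' t) t := by
    intro t
    have h1 : HasDerivAt (fun s => (inner ℝ (u0 s) (u0 s) : ℝ))
        ((inner ℝ (u0 t) (deriv u0 t) : ℝ) + (inner ℝ (deriv u0 t) (u0 t) : ℝ)) t :=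
      (hdiff t).inner ℝ (hdiff t)
    have h2 : (fun s => (inner ℝ (u0 s) (u0 s) : ℝ)) = g := by
      funext s; simp [hgdef, real_inner_self_eq_norm_sq]
    have h3 : (inner ℝ (u0 t) (deriv u0 t) : ℝ) + (inner ℝ (deriv u0 t) (u0 t) : ℝ) = g' t := by
      have hcomm := real_inner_comm (deriv u0 t) (u0 t)
      simp only [hg'def]; linarith
    rw [← h2, ← h3]; exact h1
  have hg'cont : Continuous g' := by
    rw [hg'def]
    exact continuous_const.mul (hu0.continuous.inner (hu0.continuous_deriv le_rfl))
  have hptbd : ∀ t, |g' t| ≤ (v t) ^ 2 * ‖deriv u0 t‖ ^ 2 + ((v t) ^ 2)⁻¹ * ‖u0 t‖ ^ 2 := by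
    intro t
    have h1 : |g' t| ≤ 2 * (‖u0 t‖ * ‖deriv u0 t‖) := by
      rw [hg'def]
      calc |2 * (inner ℝ (u0 t) (deriv u0 t) : ℝ)| = 2 * |(inner ℝ (u0 t) (deriv u0 t) : ℝ)| := by
            rw [abs_mul]; norm_num
        _ ≤ 2 * (‖u0 t‖ * ‖deriv u0 t‖) := by
            have := abs_real_inner_le_norm (u0 t) (deriv u0 t); linarith
    refine h1.trans ?_
    have hv := hvpos t
    have hinv : ((v t)^2)⁻¹ = ((v t)⁻¹)^2 := by rw [inv_pow]
    have hvv : v t * (v t)⁻¹ = 1 := mul_inv_cancel₀ hv.ne'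
    rw [hinv]
    have e : 2 * (v t * ‖deriv u0 t‖) * ((v t)⁻¹ * ‖u0 t‖) = 2 * (‖u0 t‖ * ‖deriv u0 t‖) := by
      field_simp
    nlinarith [sq_nonneg (v t * ‖deriv u0 t‖ - (v t)⁻¹ * ‖u0 t‖)]
  -- interval integral of |g'| is ≤ C'
  have habs : ∀ {y x : ℝ}, y ≤ x → ∫ t in y..x, |g' t| ≤ C' := by
    intro y x hyx
    refine helperH v u0 C' hb _ hg'cont.abs (fun t => abs_nonneg _) (fun t => ?_) hC hyx
    calc ENNReal.ofReal |g' t|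
        ≤ ENNReal.ofReal ((v t) ^ 2 * ‖deriv u0 t‖ ^ 2 + ((v t) ^ 2)⁻¹ * ‖u0 t‖ ^ 2) :=
          ENNReal.ofReal_le_ofReal (hptbd t)
      _ = _ := ENNReal.ofReal_add (by positivity) (by positivity)
  -- FTC bound
  have hftc : ∀ x y : ℝ, g x ≤ g y + C' := by
    intro x y
    have hii : ∀ a b : ℝ, IntervalIntegrable g' volume a b := fun a b =>
      hg'cont.intervalIntegrable a b
    rcases le_total y x with hyx | hxy
    · have heq : ∫ t in y..x, g' t = g x - g y :=
        intervalIntegral.integral_eq_sub_of_hasDerivAt (fun t _ => hg t) (hii y x)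
      have hle : ∫ t in y..x, g' t ≤ ∫ t in y..x, |g' t| := by
        apply intervalIntegral.integral_mono_on hyx (hii y x) (hg'cont.abs.intervalIntegrable y x)
        intro t _; exact le_abs_self _
      have := habs hyx
      linarith
    · have heq : ∫ t in x..y, g' t = g y - g x :=
        intervalIntegral.integral_eq_sub_of_hasDerivAt (fun t _ => hg t) (hii x y)
      have hle : ∫ t in x..y, -g' t ≤ ∫ t in x..y, |g' t| := by
        apply intervalIntegral.integral_mono_on hxy ((hii x y).neg)
          (hg'cont.abs.intervalIntegrable x y)
        intro t _; exact neg_le_abs _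
      rw [intervalIntegral.integral_neg, heq] at hle
      have := habs hxy
      linarith
  -- existence of points with small g
  have hsmall : ∀ δ : ℝ, 0 < δ → ∃ y, g y ≤ δ := by
    intro δ hδ
    by_contra hcon
    push_neg at hcon
    have hint : Integrable g volume := by
      have h0 := hL2.integrable_norm_rpow (by norm_num) (by norm_num)
      simp only [ENNReal.toReal_ofNat] at h0
      norm_num at h0
      rwa [hgdef]
    have h1 : (∫⁻ x, ENNReal.ofReal (g x)) < ⊤ := hint.lintegral_lt_top
    have h2 : (∫⁻ (x : ℝ), ENNReal.ofReal δ) ≤ ∫⁻ x, ENNReal.ofReal (g x) :=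
      lintegral_mono fun x => ENNReal.ofReal_le_ofReal (hcon x).le
    rw [lintegral_const, Real.volume_univ, ENNReal.mul_top
      (by simpa using (ENNReal.ofReal_pos.2 hδ).ne')] at h2
    exact absurd (lt_of_le_of_lt h2 h1) (by simp)
  -- conclude
  intro x
  refine le_of_forall_pos_le_add fun δ hδ => ?_
  obtain ⟨y, hy⟩ := hsmall δ hδ
  have := hftc x y
  simp only [hgdef] at this hy ⊢
  linarith
lemma holderBound (v : ℝ → ℝ) (hvcont : Continuous v) (hvpos : ∀ ξ, 0 < v ξ)
    (u0 : ℝ → ℂ) (hu0 : ContDiff ℝ 1 u0) (C' : ℝ) (hC : 0 ≤ C')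
    (hb : (∫⁻ ξ, ENNReal.ofReal ((v ξ) ^ 2 * ‖deriv u0 ξ‖ ^ 2)
        + ENNReal.ofReal (((v ξ) ^ 2)⁻¹ * ‖u0 ξ‖ ^ 2)) ≤ ENNReal.ofReal C')
    (a : ℝ) (ha : 0 < a) (M R : ℝ)
    (hM : ∀ t ∈ Icc (-R) R, ((v t) ^ 2)⁻¹ ≤ M)
    {x y : ℝ} (hx : x ∈ Icc (-R) R) (hy : y ∈ Icc (-R) R) :
    ‖u0 x - u0 y‖ ≤ (a * C' + a⁻¹ * (M * |x - y|)) / 2 := by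
  -- reduce to ordered case
  have main : ∀ {x y : ℝ}, x ∈ Icc (-R) R → y ∈ Icc (-R) R → y ≤ x →
      ‖u0 x - u0 y‖ ≤ (a * C' + a⁻¹ * (M * (x - y))) / 2 := by
    intro x y hx hy hyx
    have hdc : Continuous (deriv u0) := hu0.continuous_deriv le_rfl
    have hvinv : Continuous fun t => ((v t) ^ 2)⁻¹ :=
      ((hvcont.pow 2).inv₀ (fun t => (pow_pos (hvpos t) 2).ne'))
    -- FTC
    have hftc : ∫ t in y..x, deriv u0 t = u0 x - u0 y :=
      intervalIntegral.integral_eq_sub_of_hasDerivAt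
        (fun t _ => ((hu0.differentiable one_ne_zero) t).hasDerivAt)
        (hdc.intervalIntegrable y x)
    rw [← hftc]
    have h1 : ‖∫ t in y..x, deriv u0 t‖ ≤ ∫ t in y..x, ‖deriv u0 t‖ :=
      intervalIntegral.norm_integral_le_integral_norm hyx
    refine h1.trans ?_
    -- pointwise AM-GM
    have hpt : ∀ t, ‖deriv u0 t‖ ≤
        (a * ((v t) ^ 2 * ‖deriv u0 t‖ ^ 2) + a⁻¹ * ((v t) ^ 2)⁻¹) / 2 := by
      intro t
      set c : ℝ := ‖deriv u0 t‖ with hcdef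
      have hc0 : 0 ≤ c := norm_nonneg _
      set s : ℝ := Real.sqrt a with hsdef
      have hs0 : 0 < s := Real.sqrt_pos.2 ha
      have hs : s ^ 2 = a := Real.sq_sqrt ha.le
      have hv := hvpos t
      have h1 : (s * v t * c) ^ 2 = a * ((v t) ^ 2 * c ^ 2) := by
        rw [mul_pow, mul_pow, hs]; ring
      have h2 : (s⁻¹ * (v t)⁻¹) ^ 2 = a⁻¹ * ((v t) ^ 2)⁻¹ := by
        rw [mul_pow, inv_pow, inv_pow, hs]
      have hcross : 2 * (s * v t * c) * (s⁻¹ * (v t)⁻¹) = 2 * c := by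
        field_simp
      have hsq := sq_nonneg (s * v t * c - s⁻¹ * (v t)⁻¹)
      rw [sub_sq, h1, h2, hcross] at hsq
      linarith
    have hint1 : IntervalIntegrable (fun t => ‖deriv u0 t‖) volume y x :=
      (hdc.norm).intervalIntegrable y x
    have hcont2 : Continuous fun t => (a * ((v t) ^ 2 * ‖deriv u0 t‖ ^ 2)
        + a⁻¹ * ((v t) ^ 2)⁻¹) / 2 := by fun_prop
    have h2 : ∫ t in y..x, ‖deriv u0 t‖ ≤
        ∫ t in y..x, (a * ((v t) ^ 2 * ‖deriv u0 t‖ ^ 2) + a⁻¹ * ((v t) ^ 2)⁻¹) / 2 :=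
      intervalIntegral.integral_mono_on hyx hint1 (hcont2.intervalIntegrable y x)
        (fun t _ => hpt t)
    refine h2.trans ?_
    -- split the integral
    have hsplit : ∫ t in y..x, (a * ((v t) ^ 2 * ‖deriv u0 t‖ ^ 2) + a⁻¹ * ((v t) ^ 2)⁻¹) / 2
        = ((a * ∫ t in y..x, (v t) ^ 2 * ‖deriv u0 t‖ ^ 2)
          + a⁻¹ * ∫ t in y..x, ((v t) ^ 2)⁻¹) / 2 := by
      rw [intervalIntegral.integral_div, intervalIntegral.integral_add
        (f := fun t => a * ((v t) ^ 2 * ‖deriv u0 t‖ ^ 2)) (g := fun t => a⁻¹ * ((v t) ^ 2)⁻¹)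
        ((continuous_const.mul ((hvcont.pow 2).mul (hdc.norm.pow 2))).intervalIntegrable y x)
        ((continuous_const.mul hvinv).intervalIntegrable y x),
        intervalIntegral.integral_const_mul, intervalIntegral.integral_const_mul]
    rw [hsplit]
    have hI1 : ∫ t in y..x, (v t) ^ 2 * ‖deriv u0 t‖ ^ 2 ≤ C' := by
      refine helperH v u0 C' hb (fun t => (v t) ^ 2 * ‖deriv u0 t‖ ^ 2) ((hvcont.pow 2).mul (hdc.norm.pow 2))
        (fun t => by positivity) (fun t => le_self_add) hC hyx
    have hI2 : ∫ t in y..x, ((v t) ^ 2)⁻¹ ≤ M * (x - y) := by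
      have hMnn : ∀ t ∈ Icc y x, ((v t) ^ 2)⁻¹ ≤ M := by
        intro t ht
        exact hM t ⟨le_trans hy.1 ht.1, le_trans ht.2 hx.2⟩
      calc ∫ t in y..x, ((v t) ^ 2)⁻¹ ≤ ∫ _t in y..x, M :=
            intervalIntegral.integral_mono_on hyx (hvinv.intervalIntegrable y x)
              (intervalIntegrable_const) hMnn
        _ = M * (x - y) := by rw [intervalIntegral.integral_const, smul_eq_mul]; ring
    have ham : 0 ≤ a⁻¹ := (inv_pos.2 ha).le
    have hA := mul_le_mul_of_nonneg_left hI2 ham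
    have hB := mul_le_mul_of_nonneg_left hI1 ha.le
    linarith
  rcases le_total y x with hyx | hxy
  · have := main hx hy hyx
    rwa [abs_of_nonneg (by linarith)]
  · have := main hy hx hxy
    rw [norm_sub_rev]
    rwa [abs_of_nonpos (by linarith), neg_sub]
lemma tailBound (v : ℝ → ℝ) (u0 : ℝ → ℂ) (hu0c : Continuous u0) (hvpos : ∀ ξ, 0 < v ξ)
    (hvcont : Continuous v) (C' : ℝ)
    (hb : (∫⁻ ξ, ENNReal.ofReal ((v ξ) ^ 2 * ‖deriv u0 ξ‖ ^ 2)
        + ENNReal.ofReal (((v ξ) ^ 2)⁻¹ * ‖u0 ξ‖ ^ 2)) ≤ ENNReal.ofReal C')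
    (η R : ℝ) (hη : ∀ x, x ∉ Icc (-R) R → v x ^ 2 ≤ η) :
    (∫⁻ x in (Icc (-R) R)ᶜ, (‖u0 x‖₊ : ENNReal) ^ 2) ≤ ENNReal.ofReal η * ENNReal.ofReal C' := by
  have hmeas : Measurable fun x => ENNReal.ofReal (((v x) ^ 2)⁻¹ * ‖u0 x‖ ^ 2) := by
    apply ENNReal.measurable_ofReal.comp
    exact (((hvcont.pow 2).inv₀ fun t => (pow_pos (hvpos t) 2).ne').mul
      (hu0c.norm.pow 2)).measurable
  have hpt : ∀ x ∈ (Icc (-R) R)ᶜ, (‖u0 x‖₊ : ENNReal) ^ 2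
      ≤ ENNReal.ofReal η * ENNReal.ofReal (((v x) ^ 2)⁻¹ * ‖u0 x‖ ^ 2) := by
    intro x hx
    have hvx := hη x hx
    have h1 : (‖u0 x‖₊ : ENNReal) ^ 2 = ENNReal.ofReal (‖u0 x‖ ^ 2) := by
      rw [ENNReal.ofReal_pow (norm_nonneg _), ofReal_norm, enorm_eq_nnnorm]
    have hη0 : (0:ℝ) ≤ η := le_trans (by positivity) hvx
    have h2 : v x ^ 2 * (((v x) ^ 2)⁻¹ * ‖u0 x‖ ^ 2) = ‖u0 x‖ ^ 2 := by
      rw [← mul_assoc, mul_inv_cancel₀ (pow_pos (hvpos x) 2).ne', one_mul]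
    rw [h1]
    calc ENNReal.ofReal (‖u0 x‖ ^ 2)
        = ENNReal.ofReal (v x ^ 2 * (((v x) ^ 2)⁻¹ * ‖u0 x‖ ^ 2)) := by rw [h2]
      _ ≤ ENNReal.ofReal (η * (((v x) ^ 2)⁻¹ * ‖u0 x‖ ^ 2)) :=
          ENNReal.ofReal_le_ofReal (mul_le_mul_of_nonneg_right hvx (by positivity))
      _ = _ := ENNReal.ofReal_mul hη0
  calc (∫⁻ x in (Icc (-R) R)ᶜ, (‖u0 x‖₊ : ENNReal) ^ 2)
      ≤ ∫⁻ x in (Icc (-R) R)ᶜ, ENNReal.ofReal η * ENNReal.ofReal (((v x) ^ 2)⁻¹ * ‖u0 x‖ ^ 2) :=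
        setLIntegral_mono (hmeas.const_mul _) hpt
    _ ≤ ∫⁻ x, ENNReal.ofReal η * ENNReal.ofReal (((v x) ^ 2)⁻¹ * ‖u0 x‖ ^ 2) :=
        setLIntegral_le_lintegral _ _
    _ = ENNReal.ofReal η * ∫⁻ x, ENNReal.ofReal (((v x) ^ 2)⁻¹ * ‖u0 x‖ ^ 2) :=
        lintegral_const_mul _ hmeas
    _ ≤ ENNReal.ofReal η * ENNReal.ofReal C' := by
        refine mul_le_mul_right ?_ _
        refine le_trans (lintegral_mono fun x => ?_) hb
        exact le_add_self
lemma equicontLemma (v : ℝ → ℝ) (hvcont : Continuous v) (hvpos : ∀ ξ, 0 < v ξ)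
    (R ε C' : ℝ) (hR : 0 < R) (hε : 0 < ε) (hC : 0 ≤ C') :
    ∃ δ : ℝ, 0 < δ ∧ δ ≤ 1 ∧ ∀ (u0 : ℝ → ℂ), ContDiff ℝ 1 u0 →
      ((∫⁻ ξ, ENNReal.ofReal ((v ξ) ^ 2 * ‖deriv u0 ξ‖ ^ 2)
        + ENNReal.ofReal (((v ξ) ^ 2)⁻¹ * ‖u0 ξ‖ ^ 2)) ≤ ENNReal.ofReal C') →
      ∀ x ∈ Icc (-R) R, ∀ y ∈ Icc (-R) R, |x - y| ≤ δ → ‖u0 x - u0 y‖ ≤ ε := by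
  have hne : (Icc (-R) R).Nonempty := ⟨0, by constructor <;> linarith⟩
  have hcont : ContinuousOn (fun t => ((v t) ^ 2)⁻¹) (Icc (-R) R) :=
    ((hvcont.pow 2).inv₀ fun t => (pow_pos (hvpos t) 2).ne').continuousOn
  obtain ⟨z, hz, hzmax⟩ : ∃ z ∈ Icc (-R) R, ∀ t ∈ Icc (-R) R, ((v t) ^ 2)⁻¹ ≤ ((v z) ^ 2)⁻¹ :=
    IsCompact.exists_isMaxOn isCompact_Icc hne hcont
  set M : ℝ := ((v z) ^ 2)⁻¹ with hMdef
  have hM0 : 0 ≤ M := by positivity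
  set a : ℝ := ε / (C' + 1) with hadef
  have ha0 : 0 < a := div_pos hε (by linarith)
  set δ : ℝ := min 1 (ε * a / (M + 1)) with hδdef
  have hδ0 : 0 < δ := lt_min one_pos (by positivity)
  refine ⟨δ, hδ0, min_le_left _ _, ?_⟩
  intro u0 hu0 hb x hx y hy hxy
  have hkey := holderBound v hvcont hvpos u0 hu0 C' hC hb a ha0 M R hzmax hx hy
  have h1 : a * C' ≤ ε := by
    rw [hadef, div_mul_eq_mul_div, div_le_iff₀ (by linarith : (0:ℝ) < C' + 1)]
    nlinarith
  have h2 : a⁻¹ * (M * |x - y|) ≤ ε := by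
    have hd1 : M * |x - y| ≤ M * δ := mul_le_mul_of_nonneg_left hxy hM0
    have hd2 : M * δ ≤ M * (ε * a / (M + 1)) :=
      mul_le_mul_of_nonneg_left (min_le_right _ _) hM0
    have he : a⁻¹ * (M * (ε * a / (M + 1))) = M * ε / (M + 1) := by
      field_simp
    have hd3 : a⁻¹ * (M * |x - y|) ≤ a⁻¹ * (M * (ε * a / (M + 1))) :=
      mul_le_mul_of_nonneg_left (hd1.trans hd2) (inv_pos.2 ha0).le
    rw [he] at hd3
    refine hd3.trans ?_
    rw [div_le_iff₀ (by linarith : (0:ℝ) < M + 1)]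
    nlinarith
  linarith
lemma sqCompare (a b : ℂ) : (‖a - b‖₊ : ENNReal) ^ 2
    ≤ 2 * (‖a‖₊ : ENNReal) ^ 2 + 2 * (‖b‖₊ : ENNReal) ^ 2 := by
  have h : ‖a - b‖ ^ 2 ≤ 2 * ‖a‖ ^ 2 + 2 * ‖b‖ ^ 2 := by
    nlinarith [norm_sub_le a b, sq_nonneg (‖a‖ - ‖b‖), norm_nonneg a, norm_nonneg b,
      norm_nonneg (a - b), sq_nonneg (‖a‖ + ‖b‖)]
  have e : ∀ z : ℂ, (‖z‖₊ : ENNReal) ^ 2 = ENNReal.ofReal (‖z‖ ^ 2) := fun z => by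
    rw [ENNReal.ofReal_pow (norm_nonneg _), ofReal_norm, enorm_eq_nnnorm]
  rw [e, e, e, ← ENNReal.ofReal_ofNat 2, ← ENNReal.ofReal_mul (by norm_num),
    ← ENNReal.ofReal_mul (by norm_num), ← ENNReal.ofReal_add (by positivity) (by positivity)]
  exact ENNReal.ofReal_le_ofReal h

/-- If `v` is continuous, positive, and `v(ξ) → 0` as `|ξ| → ∞`, then every sequence of `C¹`
functions `u_n ∈ L²(ℝ)` with `∫ (v²|u_n'|² + v⁻²|u_n|²) ≤ C` has a subsequence converging
in `L²(ℝ)`. -/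
theorem weighted_bounded_implies_L2_compact
    (v : ℝ → ℝ) (hvcont : Continuous v) (hvpos : ∀ ξ, 0 < v ξ)
    (hvlim : Tendsto v (cocompact ℝ) (nhds 0))
    (u : ℕ → ℝ → ℂ)
    (hu : ∀ n, ContDiff ℝ 1 (u n)) (huL2 : ∀ n, MemLp (u n) 2 (volume : Measure ℝ))
    (C : ℝ)
    (hbound : ∀ n, (∫⁻ ξ, ENNReal.ofReal ((v ξ) ^ 2 * ‖deriv (u n) ξ‖ ^ 2)
        + ENNReal.ofReal (((v ξ) ^ 2)⁻¹ * ‖u n ξ‖ ^ 2)) ≤ ENNReal.ofReal C) :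
    ∃ φ : ℕ → ℕ, StrictMono φ ∧ ∃ w : ℝ → ℂ, MemLp w 2 (volume : Measure ℝ) ∧
      Tendsto (fun k => eLpNorm (fun ξ => u (φ k) ξ - w ξ) 2 (volume : Measure ℝ))
        atTop (nhds 0) := by
  set C' : ℝ := max C 0 with hC'def
  have hC0 : 0 ≤ C' := le_max_right _ _
  have hb : ∀ n, (∫⁻ ξ, ENNReal.ofReal ((v ξ) ^ 2 * ‖deriv (u n) ξ‖ ^ 2)
      + ENNReal.ofReal (((v ξ) ^ 2)⁻¹ * ‖u n ξ‖ ^ 2)) ≤ ENNReal.ofReal C' :=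
    fun n => (hbound n).trans (ENNReal.ofReal_le_ofReal (le_max_left _ _))
  -- uniform sup bound
  have hsup : ∀ n x, ‖u n x‖ ≤ Real.sqrt C' := by
    intro n x
    have h1 := supBound v (u n) (hu n) C' hC0 hvpos (huL2 n) (hb n) x
    calc ‖u n x‖ = Real.sqrt (‖u n x‖ ^ 2) := (Real.sqrt_sq (norm_nonneg _)).symm
      _ ≤ Real.sqrt C' := Real.sqrt_le_sqrt h1
  -- diagonal extraction at rationals
  obtain ⟨φ, L, hφ, hconv⟩ : ∃ (φ : ℕ → ℕ) (L : ℚ → ℂ), StrictMono φ ∧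
      ∀ q : ℚ, Tendsto (fun k => u (φ k) (q:ℝ)) atTop (nhds (L q)) := by
    have hcpt : IsCompact (Set.pi (univ : Set ℚ)
        fun _ : ℚ => Metric.closedBall (0:ℂ) (Real.sqrt C')) :=
      isCompact_univ_pi fun _ => isCompact_closedBall _ _
    have hmem : ∀ n, (fun q : ℚ => u n (q:ℝ)) ∈ Set.pi univ
        fun _ => Metric.closedBall (0:ℂ) (Real.sqrt C') := by
      intro n q _
      simpa [Metric.mem_closedBall, dist_zero_right] using hsup n q
    obtain ⟨L, _, φ, hφ, hconv⟩ := hcpt.tendsto_subseq hmem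
    exact ⟨φ, L, hφ, fun q => (tendsto_pi_nhds.1 hconv) q⟩
  refine ⟨φ, hφ, ?_⟩
  -- the key Cauchy estimate
  have key : ∀ ε : ℝ, 0 < ε → ∃ N, ∀ k ≥ N, ∀ l ≥ N,
      eLpNorm (fun x => u (φ k) x - u (φ l) x) 2 volume ≤ ENNReal.ofReal ε := by
    intro ε hε
    set ε2 : ℝ := ε ^ 2 with hε2def
    have hε2p : 0 < ε2 := by positivity
    set η : ℝ := ε2 / (8 * (C' + 1)) with hηdef
    have hηp : 0 < η := by positivity
    obtain ⟨R, hR1, hRtail⟩ : ∃ R : ℝ, 1 ≤ R ∧ ∀ x, x ∉ Icc (-R) R → v x ^ 2 ≤ η := by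
      have h1 : ∀ᶠ x in cocompact ℝ, dist (v x) 0 < Real.sqrt η :=
        Metric.tendsto_nhds.1 hvlim _ (Real.sqrt_pos.2 hηp)
      rw [hasBasis_cocompact.eventually_iff] at h1
      obtain ⟨K, hK, hKs⟩ := h1
      obtain ⟨r, hr⟩ := hK.isBounded.subset_closedBall 0
      refine ⟨max r 1, le_max_right _ _, fun x hx => ?_⟩
      have hxK : x ∉ K := by
        intro hxk
        apply hx
        have h2 := hr hxk
        rw [Real.closedBall_eq_Icc] at h2
        have hrm : r ≤ max r 1 := le_max_left _ _
        constructor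
        · have := h2.1; simp only [zero_sub] at this; linarith
        · have := h2.2; simp only [zero_add] at this; linarith
      have h3 := hKs hxK
      rw [dist_zero_right, Real.norm_eq_abs] at h3
      calc v x ^ 2 = |v x| ^ 2 := (sq_abs _).symm
        _ ≤ Real.sqrt η ^ 2 := by nlinarith [abs_nonneg (v x), Real.sqrt_nonneg η]
        _ = η := Real.sq_sqrt hηp.le
    have hRp : (0:ℝ) < R := lt_of_lt_of_le one_pos hR1
    set ε₁ : ℝ := Real.sqrt (ε2 / (4 * R)) with hε₁def
    have hε₁p : 0 < ε₁ := Real.sqrt_pos.2 (by positivity)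
    obtain ⟨δ, hδ0, hδ1, hδprop⟩ := equicontLemma v hvcont hvpos (R+1) (ε₁/3) C'
      (by linarith) (by positivity) hC0
    -- finite rational net of Icc (-R) R
    have hcover : Icc (-R) R ⊆ ⋃ q : ℚ, Metric.ball (q:ℝ) δ := by
      intro x _
      obtain ⟨q, hq1, hq2⟩ := exists_rat_btwn (sub_lt_self x hδ0)
      refine mem_iUnion.2 ⟨q, ?_⟩
      rw [Metric.mem_ball, Real.dist_eq, abs_sub_lt_iff]
      constructor <;> linarith
    obtain ⟨t, ht⟩ := isCompact_Icc.elim_finite_subcover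
      (fun q : ℚ => Metric.ball (q:ℝ) δ) (fun q => Metric.isOpen_ball) hcover
    have hcau : ∀ q : ℚ, ∃ N, ∀ m ≥ N, ∀ m' ≥ N,
        dist (u (φ m) (q:ℝ)) (u (φ m') (q:ℝ)) < ε₁/3 :=
      fun q => Metric.cauchySeq_iff.1 (hconv q).cauchySeq (ε₁/3) (by positivity)
    choose N hN using hcau
    refine ⟨t.sup N, fun k hk l hl => ?_⟩
    -- uniform estimate on Icc (-R) R
    have hunif : ∀ x ∈ Icc (-R) R, ‖u (φ k) x - u (φ l) x‖ ≤ ε₁ := by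
      intro x hx
      obtain ⟨q, hqt, hqx⟩ : ∃ q ∈ t, x ∈ Metric.ball (q:ℝ) δ := by
        simpa using ht hx
      have hdist : |x - (q:ℝ)| ≤ δ := by
        rw [Metric.mem_ball, Real.dist_eq] at hqx; exact hqx.le
      have habs := abs_le.1 (hdist.trans hδ1)
      have hxI : x ∈ Icc (-(R+1)) (R+1) := ⟨by linarith [hx.1], by linarith [hx.2]⟩
      have hqI : (q:ℝ) ∈ Icc (-(R+1)) (R+1) := by
        constructor
        · linarith [hx.1, habs.2]
        · linarith [hx.2, habs.1]
      have e1 : ‖u (φ k) x - u (φ k) (q:ℝ)‖ ≤ ε₁/3 :=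
        hδprop _ (hu _) (hb _) x hxI (q:ℝ) hqI hdist
      have e3 : ‖u (φ l) (q:ℝ) - u (φ l) x‖ ≤ ε₁/3 := by
        rw [norm_sub_rev]
        exact hδprop _ (hu _) (hb _) x hxI (q:ℝ) hqI hdist
      have e2 : ‖u (φ k) (q:ℝ) - u (φ l) (q:ℝ)‖ ≤ ε₁/3 := by
        have h4 := hN q k (le_trans (Finset.le_sup hqt) hk) l (le_trans (Finset.le_sup hqt) hl)
        rw [dist_eq_norm] at h4
        exact h4.le
      have hdec : u (φ k) x - u (φ l) x = (u (φ k) x - u (φ k) (q:ℝ))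
          + (u (φ k) (q:ℝ) - u (φ l) (q:ℝ)) + (u (φ l) (q:ℝ) - u (φ l) x) := by ring
      rw [hdec]
      calc ‖_ + _ + _‖ ≤ ‖u (φ k) x - u (φ k) (q:ℝ)‖ + ‖u (φ k) (q:ℝ) - u (φ l) (q:ℝ)‖
            + ‖u (φ l) (q:ℝ) - u (φ l) x‖ := norm_add₃_le
        _ ≤ ε₁ := by linarith
    -- integral estimates
    set d : ℝ → ℂ := fun x => u (φ k) x - u (φ l) x with hddef
    have hdc : Continuous d := ((hu _).continuous.sub (hu _).continuous)
    have hdm : Measurable fun x => (‖d x‖₊ : ENNReal) ^ 2 :=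
      ((hdc.measurable.nnnorm).coe_nnreal_ennreal).pow_const 2
    have hin : (∫⁻ x in Icc (-R) R, (‖d x‖₊ : ENNReal) ^ 2) ≤ ENNReal.ofReal (ε2/2) := by
      have hpt : ∀ x ∈ Icc (-R) R, (‖d x‖₊ : ENNReal) ^ 2 ≤ ENNReal.ofReal (ε₁ ^ 2) := by
        intro x hx
        have e : (‖d x‖₊ : ENNReal) ^ 2 = ENNReal.ofReal (‖d x‖ ^ 2) := by
          rw [ENNReal.ofReal_pow (norm_nonneg _), ofReal_norm, enorm_eq_nnnorm]
        rw [e]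
        exact ENNReal.ofReal_le_ofReal (by nlinarith [hunif x hx, norm_nonneg (d x)])
      calc (∫⁻ x in Icc (-R) R, (‖d x‖₊ : ENNReal) ^ 2)
          ≤ ∫⁻ _x in Icc (-R) R, ENNReal.ofReal (ε₁ ^ 2) :=
            setLIntegral_mono measurable_const hpt
        _ = ENNReal.ofReal (ε₁ ^ 2) * volume (Icc (-R) R) := setLIntegral_const _ _
        _ = ENNReal.ofReal (ε₁ ^ 2) * ENNReal.ofReal (2 * R) := by
            rw [Real.volume_Icc]
            congr 1
            ring
        _ = ENNReal.ofReal (ε₁ ^ 2 * (2 * R)) := (ENNReal.ofReal_mul (by positivity)).symm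
        _ ≤ ENNReal.ofReal (ε2 / 2) := by
            refine ENNReal.ofReal_le_ofReal ?_
            have he : ε₁ ^ 2 = ε2 / (4 * R) := Real.sq_sqrt (by positivity)
            rw [he]
            rw [div_mul_eq_mul_div, le_div_iff₀ (by norm_num : (0:ℝ) < 2)]
            rw [div_mul_eq_mul_div, div_le_iff₀ (by positivity : (0:ℝ) < 4 * R)]
            ring_nf
            nlinarith
    have hout : (∫⁻ x in (Icc (-R) R)ᶜ, (‖d x‖₊ : ENNReal) ^ 2) ≤ ENNReal.ofReal (ε2/2) := by
      have hmeasuk : ∀ m : ℕ, Measurable fun x => (‖u m x‖₊ : ENNReal) ^ 2 := fun m =>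
        (((hu m).continuous.measurable.nnnorm).coe_nnreal_ennreal).pow_const 2
      have htail : ∀ m : ℕ, (∫⁻ x in (Icc (-R) R)ᶜ, (‖u m x‖₊ : ENNReal) ^ 2)
          ≤ ENNReal.ofReal η * ENNReal.ofReal C' := fun m =>
        tailBound v (u m) (hu m).continuous hvpos hvcont C' (hb m) η R hRtail
      calc (∫⁻ x in (Icc (-R) R)ᶜ, (‖d x‖₊ : ENNReal) ^ 2)
          ≤ ∫⁻ x in (Icc (-R) R)ᶜ,
              (2 * (‖u (φ k) x‖₊ : ENNReal) ^ 2 + 2 * (‖u (φ l) x‖₊ : ENNReal) ^ 2) :=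
            setLIntegral_mono (((hmeasuk _).const_mul 2).add ((hmeasuk _).const_mul 2))
              (fun x _ => sqCompare _ _)
        _ = 2 * (∫⁻ x in (Icc (-R) R)ᶜ, (‖u (φ k) x‖₊ : ENNReal) ^ 2)
            + 2 * (∫⁻ x in (Icc (-R) R)ᶜ, (‖u (φ l) x‖₊ : ENNReal) ^ 2) := by
            rw [lintegral_add_left ((hmeasuk _).const_mul 2), lintegral_const_mul 2 (hmeasuk _),
              lintegral_const_mul 2 (hmeasuk _)]
        _ ≤ 2 * (ENNReal.ofReal η * ENNReal.ofReal C')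
            + 2 * (ENNReal.ofReal η * ENNReal.ofReal C') :=
            add_le_add (mul_le_mul_right (htail _) 2) (mul_le_mul_right (htail _) 2)
        _ = ENNReal.ofReal 4 * ENNReal.ofReal (η * C') := by
            rw [← ENNReal.ofReal_mul hηp.le]
            rw [show (ENNReal.ofReal 4) = (4:ENNReal) by norm_num]
            ring
        _ = ENNReal.ofReal (4 * (η * C')) := (ENNReal.ofReal_mul (by norm_num)).symm
        _ ≤ ENNReal.ofReal (ε2 / 2) := by
            refine ENNReal.ofReal_le_ofReal ?_
            have hkey : η * (C' + 1) = ε2 / 8 := by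
              rw [hηdef]
              field_simp
            have h5 : η * C' ≤ η * (C' + 1) :=
              mul_le_mul_of_nonneg_left (by linarith) hηp.le
            linarith
    have htotal : (∫⁻ x, (‖d x‖₊ : ENNReal) ^ 2) ≤ ENNReal.ofReal ε2 := by
      rw [← lintegral_add_compl (fun x => (‖d x‖₊ : ENNReal) ^ 2)
        (measurableSet_Icc (a := -R) (b := R))]
      calc _ ≤ ENNReal.ofReal (ε2/2) + ENNReal.ofReal (ε2/2) := add_le_add hin hout
        _ = ENNReal.ofReal ε2 := by
            rw [← ENNReal.ofReal_add (by positivity) (by positivity)]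
            norm_num
    rw [eLpNorm_eq_lintegral_rpow_enorm_toReal two_ne_zero ENNReal.ofNat_ne_top]
    simp only [ENNReal.toReal_ofNat]
    calc (∫⁻ x, (‖d x‖₊ : ENNReal) ^ (2:ℝ)) ^ (1/(2:ℝ))
        = (∫⁻ x, (‖d x‖₊ : ENNReal) ^ 2) ^ (1/(2:ℝ)) := by
          congr 1
          refine lintegral_congr fun x => ?_
          rw [← ENNReal.rpow_natCast]
          norm_num
      _ ≤ (ENNReal.ofReal ε2) ^ (1/(2:ℝ)) := ENNReal.rpow_le_rpow htotal (by norm_num)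
      _ = ENNReal.ofReal ε := by
          rw [hε2def, ENNReal.ofReal_pow hε.le, ← ENNReal.rpow_natCast (ENNReal.ofReal ε) 2,
            ← ENNReal.rpow_mul]
          norm_num
  -- package into Lp
  set S : ℕ → Lp ℂ 2 (volume : Measure ℝ) := fun k => (huL2 (φ k)).toLp (u (φ k)) with hSdef
  have hScoe : ∀ k, (S k : ℝ → ℂ) =ᶠ[ae volume] u (φ k) := fun k => (huL2 (φ k)).coeFn_toLp
  have hcauchy : CauchySeq S := by
    rw [Metric.cauchySeq_iff]
    intro ε hε
    obtain ⟨N, hNk⟩ := key (ε/2) (by positivity)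
    refine ⟨N, fun m hm n hn => ?_⟩
    have hae : (S m : ℝ → ℂ) - (S n : ℝ → ℂ) =ᶠ[ae volume]
        fun x => u (φ m) x - u (φ n) x := by
      filter_upwards [hScoe m, hScoe n] with x h1 h2
      simp [h1, h2]
    rw [Lp.dist_def, eLpNorm_congr_ae hae]
    have h6 := hNk m hm n hn
    calc (eLpNorm (fun x => u (φ m) x - u (φ n) x) 2 volume).toReal
        ≤ (ENNReal.ofReal (ε/2)).toReal := ENNReal.toReal_mono ENNReal.ofReal_ne_top h6
      _ = ε/2 := ENNReal.toReal_ofReal (by positivity)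
      _ < ε := by linarith
  obtain ⟨F, hF⟩ := cauchySeq_tendsto_of_complete hcauchy
  refine ⟨F, Lp.memLp F, ?_⟩
  have heq : ∀ k, eLpNorm (fun ξ => u (φ k) ξ - (F : ℝ → ℂ) ξ) 2 volume
      = ENNReal.ofReal (dist (S k) F) := by
    intro k
    have hae : (fun ξ => u (φ k) ξ - (F : ℝ → ℂ) ξ) =ᶠ[ae volume]
        ((S k : ℝ → ℂ) - (F : ℝ → ℂ)) := by
      filter_upwards [hScoe k] with x h1
      simp [h1]
    rw [eLpNorm_congr_ae hae, Lp.dist_def, ENNReal.ofReal_toReal]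
    have := Lp.eLpNorm_lt_top (S k - F)
    rw [eLpNorm_congr_ae (Lp.coeFn_sub (S k) F)] at this
    exact this.ne
  simp only [heq]
  have hdist : Tendsto (fun k => dist (S k) F) atTop (nhds 0) :=
    tendsto_iff_dist_tendsto_zero.1 hF
  have := (ENNReal.continuous_ofReal.tendsto 0).comp hdist
  simpa [Function.comp_def] using this
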